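/- For a BMS channel W with representative output symbols y₁,…,y_L ordered by likelihood ratio 1 ≤ LR(y₁) ≤ … ≤ LR(y_L), and any indices 1 ≤ i < j < k ≤ L, denoting by I(y_a, y_b) the capacity after merging y_a with y_b (and conjugates) via the degrading merge, at least one of I(y_i,y_j) ≥ I(y_i,y_k) or I(y_j,y_k) ≥ I(y_i,y_k) holds. That is, the best pair to merge among any triple is always a pair of LR-consecutive symbols, never the outer pair alone being strictly best. -/

import Mathlib

open scoped BigOperators

/-- `P : A → B → ℝ` is a channel: nonnegative entries, rows sum to 1. -/
def IsChannel {A B : Type*} [Fintype B] (P : A → B → ℝ) : Prop :=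
  (∀ a b, 0 ≤ P a b) ∧ ∀ a, ∑ b, P a b = 1

/-- Symmetric capacity of a binary-input channel. -/
noncomputable def Icap {Z : Type*} [Fintype Z] (Q : Bool → Z → ℝ) : ℝ :=
  ∑ z, ∑ x : Bool,
    (1 / 2) * Q x z * Real.logb 2 (Q x z / ((Q false z + Q true z) / 2))

/-- The degrading merge of symbols `w₁` and `w₂` (and their conjugates) of `W`:
the four merged symbols keep probability `0`, and the two new symbols
`inr false = z`, `inr true = z̄` get the summed probabilities. -/
noncomputable def mergeCh {Y : Type*} [DecidableEq Y]
    (W : Bool → Y → ℝ) (c : Y → Y) (w₁ w₂ : Y) : Bool → (Y ⊕ Bool) → ℝ :=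
  fun x s =>
    Sum.elim
      (fun y => if y = w₁ ∨ y = c w₁ ∨ y = w₂ ∨ y = c w₂ then 0 else W x y)
      (fun b : Bool => if b then W x (c w₁) + W x (c w₂) else W x w₁ + W x w₂) s

noncomputable def ff (p q : ℝ) : ℝ := p * Real.log (p/(p+q)) + q * Real.log (q/(p+q))

lemma ff_homog {t : ℝ} (ht : 0 ≤ t) (p q : ℝ) : ff (t*p) (t*q) = t * ff p q := by
  rcases eq_or_lt_of_le ht with h|h
  · simp [ff, ← h]
  · unfold ff
    rw [show t*p + t*q = t*(p+q) by ring, mul_div_mul_left _ _ (ne_of_gt h),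
        mul_div_mul_left _ _ (ne_of_gt h)]
    ring

lemma log_ineq {x : ℝ} (hx : 0 < x) : 1 - 1/x ≤ Real.log x := by
  have := Real.log_le_sub_one_of_pos (show (0:ℝ) < 1/x by positivity)
  rw [Real.log_div one_ne_zero (ne_of_gt hx), Real.log_one] at this
  linarith

lemma logsum_term {a b A B : ℝ} (ha : 0 ≤ a) (hab : a ≤ b) (hA : 0 < A) (hB : 0 < B) :
    a * Real.log (A/B) + a - b*(A/B) ≤ a * Real.log (a/b) := by
  rcases eq_or_lt_of_le ha with h|h
  · have hb : 0 ≤ b := le_trans ha hab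
    have : 0 ≤ b * (A/B) := mul_nonneg hb (by positivity)
    simp [← h]
    linarith
  · have hb : 0 < b := lt_of_lt_of_le h hab
    have key : 1 - (b*A)/(a*B) ≤ Real.log ((a*B)/(b*A)) := by
      have := log_ineq (show 0 < (a*B)/(b*A) by positivity)
      rw [one_div_div] at this
      exact this
    have hlog : Real.log ((a*B)/(b*A)) = Real.log (a/b) - Real.log (A/B) := by
      rw [Real.log_div (by positivity) (by positivity), Real.log_mul (ne_of_gt h) (ne_of_gt hB),
          Real.log_mul (ne_of_gt hb) (ne_of_gt hA), Real.log_div (ne_of_gt h) (ne_of_gt hb),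
          Real.log_div (ne_of_gt hA) (ne_of_gt hB)]
      ring
    rw [hlog] at key
    have := mul_le_mul_of_nonneg_left key (le_of_lt h)
    have h2 : a * (1 - (b*A)/(a*B)) = a - b*(A/B) := by field_simp
    nlinarith [key, h]

lemma logsum {a1 a2 b1 b2 : ℝ} (h1 : 0 ≤ a1) (h2 : 0 ≤ a2) (hb1 : a1 ≤ b1) (hb2 : a2 ≤ b2) :
    (a1+a2) * Real.log ((a1+a2)/(b1+b2)) ≤ a1 * Real.log (a1/b1) + a2 * Real.log (a2/b2) := by
  have hb1' : 0 ≤ b1 := le_trans h1 hb1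
  have hb2' : 0 ≤ b2 := le_trans h2 hb2
  rcases eq_or_lt_of_le (show (0:ℝ) ≤ b1 + b2 by linarith) with hB|hB
  · have : b1 = 0 := by linarith
    have : b2 = 0 := by linarith
    have ha1 : a1 = 0 := le_antisymm (by linarith) h1
    have ha2 : a2 = 0 := le_antisymm (by linarith) h2
    simp [ha1, ha2]
  · rcases eq_or_lt_of_le (show (0:ℝ) ≤ a1 + a2 by linarith) with hA|hA
    · have ha1 : a1 = 0 := by linarith
      have ha2 : a2 = 0 := by linarith
      simp [ha1, ha2]
    · have k1 := logsum_term h1 hb1 hA hB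
      have k2 := logsum_term h2 hb2 hA hB
      have hsum : (a1+a2) - (b1+b2)*((a1+a2)/(b1+b2)) = 0 := by
        field_simp
        ring
      nlinarith [k1, k2]

lemma ff_subadd {p1 q1 p2 q2 : ℝ} (hp1 : 0 ≤ p1) (hq1 : 0 ≤ q1) (hp2 : 0 ≤ p2) (hq2 : 0 ≤ q2) :
    ff (p1+p2) (q1+q2) ≤ ff p1 q1 + ff p2 q2 := by
  have key1 := logsum hp1 hp2 (show p1 ≤ p1+q1 by linarith) (show p2 ≤ p2+q2 by linarith)
  have key2 := logsum hq1 hq2 (show q1 ≤ p1+q1 by linarith) (show q2 ≤ p2+q2 by linarith)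
  unfold ff
  have e1 : p1+p2+(q1+q2) = (p1+q1)+(p2+q2) := by ring
  rw [e1]
  have e2 : q1 + q2 = q1 + q2 := rfl
  calc (p1+p2) * Real.log ((p1+p2)/((p1+q1)+(p2+q2))) + (q1+q2) * Real.log ((q1+q2)/((p1+q1)+(p2+q2)))
      ≤ (p1 * Real.log (p1/(p1+q1)) + p2 * Real.log (p2/(p2+q2)))
        + (q1 * Real.log (q1/(p1+q1)) + q2 * Real.log (q2/(p2+q2))) := by
        exact add_le_add key1 key2
    _ = p1 * Real.log (p1/(p1+q1)) + q1 * Real.log (q1/(p1+q1))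
        + (p2 * Real.log (p2/(p2+q2)) + q2 * Real.log (q2/(p2+q2))) := by ring

lemma caseA {p q p' q' α β : ℝ} (hp : 0 ≤ p) (hq : 0 ≤ q) (hp' : 0 ≤ p') (hq' : 0 ≤ q')
    (hα : 0 ≤ α) (hβ : 0 ≤ β) (hβα : β ≤ 1 + α) :
    ff (p+p') (q+q') + ff (α*p + β*p') (α*q + β*q')
      ≤ ff (p + (α*p + β*p')) (q + (α*q + β*q')) + ff p' q' := by
  have hA : (0:ℝ) < 1 + α := by linarith
  have e1 : (1+α)*(p+p') = (p + (α*p + β*p')) + (1+α-β)*p' := by ring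
  have e1' : (1+α)*(q+q') = (q + (α*q + β*q')) + (1+α-β)*q' := by ring
  have h1 : (1+α) * ff (p+p') (q+q') ≤ ff (p + (α*p + β*p')) (q + (α*q + β*q')) + (1+α-β) * ff p' q' := by
    have h := ff_subadd (show 0 ≤ p + (α*p + β*p') by positivity) (show 0 ≤ q + (α*q + β*q') by positivity)
      (show 0 ≤ (1+α-β)*p' by nlinarith) (show 0 ≤ (1+α-β)*q' by nlinarith)
    rw [ff_homog (show (0:ℝ) ≤ 1+α-β by linarith)] at h
    rw [← ff_homog hA.le, e1, e1']
    exact h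
  have e2 : (1+α)*(α*p + β*p') = α*(p + (α*p + β*p')) + β*p' := by ring
  have e2' : (1+α)*(α*q + β*q') = α*(q + (α*q + β*q')) + β*q' := by ring
  have h2 : (1+α) * ff (α*p + β*p') (α*q + β*q')
      ≤ α * ff (p + (α*p + β*p')) (q + (α*q + β*q')) + β * ff p' q' := by
    have h := ff_subadd (show 0 ≤ α*(p + (α*p + β*p')) by positivity) (show 0 ≤ α*(q + (α*q + β*q')) by positivity)
      (show 0 ≤ β*p' by positivity) (show 0 ≤ β*q' by positivity)
    rw [ff_homog hα, ff_homog hβ] at h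
    rw [← ff_homog hA.le, e2, e2']
    exact h
  nlinarith [add_le_add h1 h2]

/-- The core inequality. -/
lemma core {p1 q1 p2 q2 p3 q3 : ℝ}
    (hp1 : 0 ≤ p1) (hq1 : 0 ≤ q1) (hp2 : 0 ≤ p2) (hq2 : 0 ≤ q2) (hp3 : 0 ≤ p3) (hq3 : 0 ≤ q3)
    (h12 : p1*q2 ≤ p2*q1) (h23 : p2*q3 ≤ p3*q2) (h13 : p1*q3 ≤ p3*q1) :
    ff (p1+p3) (q1+q3) + ff p2 q2 ≤ ff (p1+p2) (q1+q2) + ff p3 q3 ∨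
    ff (p1+p3) (q1+q3) + ff p2 q2 ≤ ff (p2+p3) (q2+q3) + ff p1 q1 := by
  rcases eq_or_lt_of_le h13 with hD|hD
  · -- degenerate case: p1*q3 = p3*q1
    rcases eq_or_lt_of_le (show (0:ℝ) ≤ p1 + q1 by linarith) with h1z|h1z
    · -- v1 = 0
      left
      have e1 : p1 = 0 := by linarith
      have e2 : q1 = 0 := by linarith
      simp [e1, e2]
      linarith
    rcases eq_or_lt_of_le (show (0:ℝ) ≤ p3 + q3 by linarith) with h3z|h3z
    · -- v3 = 0
      right
      have e1 : p3 = 0 := by linarith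
      have e2 : q3 = 0 := by linarith
      simp [e1, e2]
      linarith
    · -- v1 = t v3, v2 = s v3
      left
      set t := (p1+q1)/(p3+q3) with htdef
      have ht : 0 ≤ t := by positivity
      have h3ne : p3 + q3 ≠ 0 := ne_of_gt h3z
      have hp1t : p1 = t * p3 := by
        rw [htdef]; rw [div_mul_eq_mul_div, eq_div_iff h3ne]; nlinarith [hD]
      have hq1t : q1 = t * q3 := by
        rw [htdef]; rw [div_mul_eq_mul_div, eq_div_iff h3ne]; nlinarith [hD]
      have h23' : p3 * q2 ≤ p2 * q3 := by
        rcases eq_or_lt_of_le (show (0:ℝ) ≤ t by exact ht) with htz|htz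
        · -- t = 0 → v1 = 0, contradiction with h1z
          exfalso
          have : p1 + q1 = 0 := by rw [hp1t, hq1t, ← htz]; ring
          linarith
        · have := h12
          rw [hp1t, hq1t] at this
          have : t * (p3 * q2) ≤ t * (p2 * q3) := by nlinarith [this]
          exact le_of_mul_le_mul_left this htz
      have h2eq : p2 * q3 = p3 * q2 := le_antisymm h23 h23'
      set s := (p2+q2)/(p3+q3) with hsdef
      have hs : 0 ≤ s := by positivity
      have hp2s : p2 = s * p3 := by
        rw [hsdef]; rw [div_mul_eq_mul_div, eq_div_iff h3ne]; nlinarith [h2eq]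
      have hq2s : q2 = s * q3 := by
        rw [hsdef]; rw [div_mul_eq_mul_div, eq_div_iff h3ne]; nlinarith [h2eq]
      have r1 : p1 + p3 = (t+1)*p3 := by rw [hp1t]; ring
      have r2 : q1 + q3 = (t+1)*q3 := by rw [hq1t]; ring
      have r3 : p1 + p2 = (t+s)*p3 := by rw [hp1t, hp2s]; ring
      have r4 : q1 + q2 = (t+s)*q3 := by rw [hq1t, hq2s]; ring
      rw [r1, r2, r3, r4, hp2s, hq2s, ff_homog (show (0:ℝ) ≤ t+1 by linarith),
          ff_homog hs, ff_homog (show (0:ℝ) ≤ t+s by linarith)]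
      nlinarith []
  · -- cone case
    have hDpos : 0 < p3*q1 - p1*q3 := by linarith
    have hDne : p3*q1 - p1*q3 ≠ 0 := ne_of_gt hDpos
    set a := (p3*q2 - p2*q3)/(p3*q1 - p1*q3) with ha
    set b := (p2*q1 - p1*q2)/(p3*q1 - p1*q3) with hb
    have ha0 : 0 ≤ a := div_nonneg (by linarith) (by linarith)
    have hb0 : 0 ≤ b := div_nonneg (by linarith) (by linarith)
    have hap : a*p1 + b*p3 = p2 := by
      rw [ha, hb, div_mul_eq_mul_div, div_mul_eq_mul_div, ← add_div, div_eq_iff hDne]; ring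
    have haq : a*q1 + b*q3 = q2 := by
      rw [ha, hb, div_mul_eq_mul_div, div_mul_eq_mul_div, ← add_div, div_eq_iff hDne]; ring
    rcases le_or_gt b (1+a) with hba|hba
    · left
      have h := caseA hp1 hq1 hp3 hq3 ha0 hb0 hba
      rw [hap, haq] at h
      linarith
    · right
      have hab : a ≤ 1 + b := by linarith
      have h := caseA hp3 hq3 hp1 hq1 hb0 ha0 hab
      rw [show b*p3 + a*p1 = a*p1 + b*p3 by ring, show b*q3 + a*q1 = a*q1 + b*q3 by ring,
          hap, haq, show p3+p1 = p1+p3 by ring, show q3+q1 = q1+q3 by ring,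
          show p3+p2 = p2+p3 by ring, show q3+q2 = q2+q3 by ring] at h
      linarith

noncomputable def uu (p q : ℝ) : ℝ :=
  1/2 * p * Real.logb 2 (p / ((p+q)/2)) + 1/2 * q * Real.logb 2 (q / ((p+q)/2))

lemma uu_comm (p q : ℝ) : uu p q = uu q p := by
  unfold uu; rw [add_comm q p]; ring

lemma logb_half_term {p q : ℝ} (hp : 0 ≤ p) (hq : 0 ≤ q) :
    p * Real.logb 2 (p / ((p+q)/2)) = p * Real.log (p/(p+q)) / Real.log 2 + p := by
  rcases eq_or_lt_of_le hp with h|h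
  · simp [← h]
  · have hpq : 0 < p + q := by linarith
    have e : p / ((p+q)/2) = 2 * (p/(p+q)) := by field_simp
    rw [e, Real.logb, Real.log_mul (by norm_num) (by positivity)]
    have h2 : Real.log 2 ≠ 0 := by
      have := Real.log_pos (by norm_num : (1:ℝ) < 2); linarith
    field_simp
    ring

lemma uu_ff {p q : ℝ} (hp : 0 ≤ p) (hq : 0 ≤ q) :
    2 * uu p q = ff p q / Real.log 2 + (p + q) := by
  unfold uu ff
  rw [show (1:ℝ)/2 * p * Real.logb 2 (p / ((p+q)/2)) + 1/2 * q * Real.logb 2 (q / ((p+q)/2))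
      = 1/2 * (p * Real.logb 2 (p / ((p+q)/2))) + 1/2 * (q * Real.logb 2 (q / ((p+q)/2))) by ring,
     logb_half_term hp hq]
  rw [show q / ((p+q)/2) = q / ((q+p)/2) by rw [add_comm p q], show p + q = q + p by ring]
  rw [logb_half_term hq hp, add_comm q p]
  ring

lemma icap_merge {Y : Type*} [Fintype Y] [DecidableEq Y] (W : Bool → Y → ℝ) (c : Y → Y)
    (hc : Function.Involutive c) (hsym : ∀ z, W true z = W false (c z))
    (w₁ w₂ : Y) (h1 : w₁ ≠ c w₁) (h2 : w₂ ≠ c w₂) (h3 : w₁ ≠ w₂) (h4 : w₁ ≠ c w₂)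
    (h5 : c w₁ ≠ w₂) :
    Icap (mergeCh W c w₁ w₂) = (∑ z, uu (W false z) (W false (c z)))
      - 2 * uu (W false w₁) (W false (c w₁)) - 2 * uu (W false w₂) (W false (c w₂))
      + 2 * uu (W false w₁ + W false w₂) (W false (c w₁) + W false (c w₂)) := by
  classical
  have h6 : c w₁ ≠ c w₂ := fun h => h3 (hc.injective h)
  have htc : ∀ w, W true (c w) = W false w := fun w => by rw [hsym, hc]
  unfold Icap
  rw [Fintype.sum_sum_type]
  have hinl : ∀ z : Y,
      (∑ x : Bool, (1/2) * mergeCh W c w₁ w₂ x (Sum.inl z) *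
        Real.logb 2 (mergeCh W c w₁ w₂ x (Sum.inl z) /
          ((mergeCh W c w₁ w₂ false (Sum.inl z) + mergeCh W c w₁ w₂ true (Sum.inl z)) / 2)))
      = if z = w₁ ∨ z = c w₁ ∨ z = w₂ ∨ z = c w₂ then 0
        else uu (W false z) (W false (c z)) := by
    intro z
    by_cases hz : z = w₁ ∨ z = c w₁ ∨ z = w₂ ∨ z = c w₂
    · simp [mergeCh, hz]
    · simp [mergeCh, hz, uu, Fintype.sum_bool, hsym z]
      ring
  rw [Finset.sum_congr rfl (fun z _ => hinl z)]
  have hsplit : (∑ z : Y, if z = w₁ ∨ z = c w₁ ∨ z = w₂ ∨ z = c w₂ then 0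
        else uu (W false z) (W false (c z)))
      = (∑ z : Y, uu (W false z) (W false (c z)))
        - (uu (W false w₁) (W false (c w₁)) + uu (W false (c w₁)) (W false w₁)
           + uu (W false w₂) (W false (c w₂)) + uu (W false (c w₂)) (W false w₂)) := by
    have e1 : (∑ z : Y, if z = w₁ ∨ z = c w₁ ∨ z = w₂ ∨ z = c w₂ then 0
          else uu (W false z) (W false (c z)))
        = ∑ z : Y, (uu (W false z) (W false (c z))
            - if z = w₁ ∨ z = c w₁ ∨ z = w₂ ∨ z = c w₂ then uu (W false z) (W false (c z)) else 0) := by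
      apply Finset.sum_congr rfl
      intro z _
      by_cases h : z = w₁ ∨ z = c w₁ ∨ z = w₂ ∨ z = c w₂ <;> simp [h]
    rw [e1, Finset.sum_sub_distrib]
    congr 1
    have e2 : (∑ z : Y, if z = w₁ ∨ z = c w₁ ∨ z = w₂ ∨ z = c w₂ then uu (W false z) (W false (c z)) else 0)
        = ∑ z ∈ ({w₁, c w₁, w₂, c w₂} : Finset Y), uu (W false z) (W false (c z)) := by
      rw [← Finset.sum_filter]
      apply Finset.sum_congr
      · ext z
        simp [Finset.mem_filter]
      · intros; rfl
    rw [e2, Finset.sum_insert (by simp [h1, h3, h4]),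
        Finset.sum_insert (by simp [h5, h6]),
        Finset.sum_insert (by simp [h2]), Finset.sum_singleton]
    rw [hc w₁, hc w₂]
    ring
  rw [hsplit]
  have hinr : (∑ b : Bool, ∑ x : Bool, (1/2) * mergeCh W c w₁ w₂ x (Sum.inr b) *
        Real.logb 2 (mergeCh W c w₁ w₂ x (Sum.inr b) /
          ((mergeCh W c w₁ w₂ false (Sum.inr b) + mergeCh W c w₁ w₂ true (Sum.inr b)) / 2)))
      = 2 * uu (W false w₁ + W false w₂) (W false (c w₁) + W false (c w₂)) := by
    simp [mergeCh, Fintype.sum_bool, uu, hsym w₁, hsym w₂, htc w₁, htc w₂]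
    rw [show W false (c w₁) + W false (c w₂) + (W false w₁ + W false w₂)
        = W false w₁ + W false w₂ + (W false (c w₁) + W false (c w₂)) by ring]
    ring
  rw [hinr, uu_comm (W false (c w₁)) (W false w₁), uu_comm (W false (c w₂)) (W false w₂)]
  ring

lemma uu_trans {pa qa pb qb pc qc pd qd : ℝ}
    (ha : 0 ≤ pa) (ha' : 0 ≤ qa) (hb : 0 ≤ pb) (hb' : 0 ≤ qb)
    (hcn : 0 ≤ pc) (hc' : 0 ≤ qc) (hd : 0 ≤ pd) (hd' : 0 ≤ qd)
    (hsum : pa + qa + (pb + qb) = pc + qc + (pd + qd))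
    (hff : ff pc qc + ff pd qd ≤ ff pa qa + ff pb qb) :
    2 * uu pc qc + 2 * uu pd qd ≤ 2 * uu pa qa + 2 * uu pb qb := by
  have hl2 : 0 < Real.log 2 := Real.log_pos (by norm_num)
  have hdiv : (ff pc qc + ff pd qd) / Real.log 2 ≤ (ff pa qa + ff pb qb) / Real.log 2 :=
    (div_le_div_iff_of_pos_right hl2).mpr hff
  rw [add_div, add_div] at hdiv
  rw [uu_ff ha ha', uu_ff hb hb', uu_ff hcn hc', uu_ff hd hd']
  linarith

/-- among any LR-ordered triple, merging one of the two
consecutive pairs is at least as good (in capacity) as merging the outer pair. -/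
theorem degrade_consecutive_merge_optimal {Y : Type*} [Fintype Y] [DecidableEq Y]
    {L : ℕ} (W : Bool → Y → ℝ) (hW : IsChannel W)
    (c : Y → Y) (hc : Function.Involutive c) (hnofix : ∀ y, c y ≠ y)
    (hsym : ∀ y, W true y = W false (c y))
    (y : Fin L → Y) (hinj : Function.Injective y)
    (hrep : ∀ a b : Fin L, y a ≠ c (y b))
    (hcover : ∀ w : Y, ∃ a : Fin L, w = y a ∨ w = c (y a))
    (hLRone : ∀ a : Fin L, W false (c (y a)) ≤ W false (y a))
    (hLRord : ∀ a b : Fin L, a ≤ b →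
      W false (y a) * W false (c (y b)) ≤ W false (y b) * W false (c (y a)))
    (i j k : Fin L) (hij : i < j) (hjk : j < k) :
    Icap (mergeCh W c (y i) (y j)) ≥ Icap (mergeCh W c (y i) (y k)) ∨
    Icap (mergeCh W c (y j) (y k)) ≥ Icap (mergeCh W c (y i) (y k)) := by
  have hw : ∀ x z, 0 ≤ W x z := hW.1
  have hik : i < k := lt_trans hij hjk
  have d6 : ∀ a b : Fin L, a ≠ b → c (y a) ≠ y b := fun a b h => (hrep b a).symm
  -- core disjunction
  have hcore := core (hw false (y i)) (hw false (c (y i))) (hw false (y j)) (hw false (c (y j)))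
    (hw false (y k)) (hw false (c (y k)))
    (hLRord i j hij.le) (hLRord j k hjk.le) (hLRord i k hik.le)
  have mij := icap_merge W c hc hsym (y i) (y j) (hrep i i) (hrep j j) (hinj.ne hij.ne)
    (hrep i j) (d6 i j hij.ne)
  have mik := icap_merge W c hc hsym (y i) (y k) (hrep i i) (hrep k k) (hinj.ne hik.ne)
    (hrep i k) (d6 i k hik.ne)
  have mjk := icap_merge W c hc hsym (y j) (y k) (hrep j j) (hrep k k) (hinj.ne hjk.ne)
    (hrep j k) (d6 j k hjk.ne)
  rcases hcore with hA | hB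
  · left
    have key := uu_trans (by exact add_nonneg (hw _ _) (hw _ _)) (by exact add_nonneg (hw _ _) (hw _ _)) (hw false (y k)) (hw false (c (y k)))
      (by exact add_nonneg (hw _ _) (hw _ _)) (by exact add_nonneg (hw _ _) (hw _ _)) (hw false (y j)) (hw false (c (y j)))
      (by ring) hA
    rw [ge_iff_le, mij, mik]
    linarith
  · right
    have key := uu_trans (by exact add_nonneg (hw _ _) (hw _ _)) (by exact add_nonneg (hw _ _) (hw _ _)) (hw false (y i)) (hw false (c (y i)))
      (by exact add_nonneg (hw _ _) (hw _ _)) (by exact add_nonneg (hw _ _) (hw _ _)) (hw false (y j)) (hw false (c (y j)))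
      (by ring) hB
    rw [ge_iff_le, mjk, mik]
    linarith
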